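/- Let μ be a probability measure on ℝ with finite second moment, mean m and variance σ², and let λ(ω) = ∫ e^{iωE} dμ(E) denote its characteristic function. Then for every real ω, |λ(ω)|² ≥ 1 − σ² ω². -/

import Mathlib

open MeasureTheory

/-- For a probability measure `μ` on `ℝ` with finite second moment and
variance `σ²`, its characteristic function `λ(ω) = ∫ e^{iωE} dμ(E)` satisfies
`|λ(ω)|² ≥ 1 - σ² ω²` for every real `ω`. -/
theorem stmt_3 (μ : Measure ℝ) [IsProbabilityMeasure μ]
    (h2 : Integrable (fun E => E ^ 2) μ) (ω : ℝ) :
    1 - ((∫ E, E ^ 2 ∂μ) - (∫ E, E ∂μ) ^ 2) * ω ^ 2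
      ≤ ‖∫ E, Complex.exp (Complex.I * ω * E) ∂μ‖ ^ 2 := by
  set m := ∫ E, E ∂μ with hm
  -- integrability of E
  have hE : Integrable (fun E : ℝ => E) μ := by
    have := (memLp_two_iff_integrable_sq aestronglyMeasurable_id).2 (by simpa using h2)
    exact this.integrable (by norm_num)
  -- variance identity : ∫ (E-m)^2 = ∫ E^2 - m^2
  have hvar : ∫ E, (E - m) ^ 2 ∂μ = (∫ E, E ^ 2 ∂μ) - m ^ 2 := by
    have : (fun E : ℝ => (E - m) ^ 2) = fun E => E ^ 2 - (2 * m) * E + m ^ 2 := by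
      funext E; ring
    have hsub : Integrable (fun E : ℝ => E ^ 2 - 2 * m * E) μ := h2.sub (hE.const_mul (2*m))
    rw [this, integral_add hsub (integrable_const _),
      integral_sub h2 (hE.const_mul (2*m)), integral_const_mul, integral_const]
    simp [hm]
    ring
  have hEm2 : Integrable (fun E : ℝ => (E - m) ^ 2) μ := by
    have : (fun E : ℝ => (E - m) ^ 2) = fun E => E ^ 2 - (2 * m) * E + m ^ 2 := by
      funext E; ring
    rw [this]
    exact (h2.sub (hE.const_mul (2*m))).add (integrable_const _)
  -- integrability of the exponential
  have hf : Integrable (fun E : ℝ => Complex.exp (Complex.I * ω * (E - m))) μ := by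
    apply Integrable.mono' (integrable_const (1:ℝ))
    · exact (Complex.continuous_exp.comp (by continuity)).aestronglyMeasurable
    · filter_upwards with E
      rw [Complex.norm_exp]
      simp [Complex.mul_re, Complex.mul_im]
  have hf0 : Integrable (fun E : ℝ => Complex.exp (Complex.I * ω * E)) μ := by
    apply Integrable.mono' (integrable_const (1:ℝ))
    · exact (Complex.continuous_exp.comp (by continuity)).aestronglyMeasurable
    · filter_upwards with E
      rw [Complex.norm_exp]
      simp [Complex.mul_re, Complex.mul_im]
  set L := ‖∫ E, Complex.exp (Complex.I * ω * E) ∂μ‖ with hL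
  -- shift by exp(-I ω m) has norm 1
  have hshift : ‖∫ E, Complex.exp (Complex.I * ω * (E - m)) ∂μ‖ = L := by
    have : ∀ E : ℝ, Complex.exp (Complex.I * ω * (E - m))
        = Complex.exp (-(Complex.I * ω * m)) * Complex.exp (Complex.I * ω * E) := by
      intro E; rw [← Complex.exp_add]; ring_nf
    simp_rw [this]
    rw [integral_const_mul, norm_mul, Complex.norm_exp]
    have : (-(Complex.I * ω * m)).re = 0 := by
      simp [Complex.mul_re, Complex.mul_im]
    rw [this, Real.exp_zero, one_mul]
  -- re part is the cos integral
  have hre : ∀ E : ℝ, (Complex.exp (Complex.I * ω * (E - m))).re = Real.cos (ω * (E - m)) := by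
    intro E
    have : Complex.I * ω * (E - m) = ((ω * (E - m) : ℝ) : ℂ) * Complex.I := by
      push_cast; ring
    rw [this, Complex.exp_ofReal_mul_I_re]
  -- cos integral lower bound
  have hcos : Integrable (fun E : ℝ => Real.cos (ω * (E - m))) μ := by
    simp_rw [← hre]
    exact hf.re
  have hq : Integrable (fun E : ℝ => 1 - (ω * (E - m)) ^ 2 / 2) μ := by
    have : (fun E : ℝ => 1 - (ω * (E - m)) ^ 2 / 2)
        = fun E => 1 - (ω ^ 2 / 2) * (E - m) ^ 2 := by funext E; ring
    rw [this]
    exact (integrable_const _).sub (hEm2.const_mul _)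
  have hkey : 1 - ((∫ E, E ^ 2 ∂μ) - m ^ 2) * ω ^ 2 / 2
      ≤ ∫ E, Real.cos (ω * (E - m)) ∂μ := by
    have hle : ∫ E, (1 - (ω * (E - m)) ^ 2 / 2) ∂μ ≤ ∫ E, Real.cos (ω * (E - m)) ∂μ :=
      integral_mono hq hcos (fun E => Real.one_sub_sq_div_two_le_cos)
    have heq : ∫ E, (1 - (ω * (E - m)) ^ 2 / 2) ∂μ
        = 1 - ((∫ E, E ^ 2 ∂μ) - m ^ 2) * ω ^ 2 / 2 := by
      have : (fun E : ℝ => 1 - (ω * (E - m)) ^ 2 / 2)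
          = fun E => 1 - (ω ^ 2 / 2) * (E - m) ^ 2 := by funext E; ring
      rw [this, integral_sub (integrable_const _) (hEm2.const_mul _),
        integral_const_mul, integral_const, hvar]
      simp
      ring
    linarith
  -- cos integral ≤ L
  have hcosL : ∫ E, Real.cos (ω * (E - m)) ∂μ ≤ L := by
    calc ∫ E, Real.cos (ω * (E - m)) ∂μ
        = (∫ E, Complex.exp (Complex.I * ω * (E - m)) ∂μ).re := by
          have h' := integral_re (𝕜 := ℂ) hf
          simp only [RCLike.re_to_complex] at h'
          rw [← h']; simp_rw [hre]
      _ ≤ ‖∫ E, Complex.exp (Complex.I * ω * (E - m)) ∂μ‖ := Complex.re_le_norm _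
      _ = L := hshift
  have hL0 : 0 ≤ L := norm_nonneg _
  have hL1 : L ≤ 1 := by
    rw [hL]
    calc ‖∫ E, Complex.exp (Complex.I * ω * E) ∂μ‖
        ≤ ∫ E, ‖Complex.exp (Complex.I * ω * E)‖ ∂μ := norm_integral_le_integral_norm _
      _ ≤ 1 := by
          have : ∀ E : ℝ, ‖Complex.exp (Complex.I * ω * E)‖ = 1 := by
            intro E
            rw [Complex.norm_exp]
            simp [Complex.mul_re, Complex.mul_im]
          simp_rw [this]; simp
  have h1 : 1 - ((∫ E, E ^ 2 ∂μ) - m ^ 2) * ω ^ 2 / 2 ≤ L := le_trans hkey hcosL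
  nlinarith [sq_nonneg (L - 1 + ((∫ E, E ^ 2 ∂μ) - m ^ 2) * ω ^ 2 / 2),
    sq_nonneg (((∫ E, E ^ 2 ∂μ) - m ^ 2) * ω ^ 2), mul_nonneg hL0 hL0]
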